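/- For all natural numbers N and all k with 0 ≤ k ≤ N + 1, the following identity holds in ℚ: binom(2N, 2k)/(2N − 2k + 1) + binom(2N, 2N − 2k + 2)/(2k − 1) = binom(2N + 2, 2k)/(2N + 1), where the divisions are taken in ℚ (note 2k − 1 = −1 when k = 0, and binomial coefficients with lower index exceeding the upper index are 0). -/

import Mathlib

/-- For all natural numbers `N` and all `k ≤ N + 1`, in `ℚ`:
`C(2N, 2k)/(2N - 2k + 1) + C(2N, 2N - 2k + 2)/(2k - 1) = C(2N + 2, 2k)/(2N + 1)`,
the divisions being taken in `ℚ` (so `2k - 1 = -1` when `k = 0`). -/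
theorem stmt_11 (N k : ℕ) (hk : k ≤ N + 1) :
    (Nat.choose (2 * N) (2 * k) : ℚ) / (2 * (N : ℚ) - 2 * k + 1) +
      (Nat.choose (2 * N) (2 * N + 2 - 2 * k) : ℚ) / (2 * (k : ℚ) - 1) =
    (Nat.choose (2 * N + 2) (2 * k) : ℚ) / (2 * (N : ℚ) + 1) := by
  rcases Nat.eq_zero_or_pos k with rfl | hk1
  · have h0 : (2 * N).choose (2 * N + 2 - 2 * 0) = 0 := by
      apply Nat.choose_eq_zero_of_lt; omega
    rw [h0]; simp
  rcases hk.lt_or_eq with hkN | rfl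
  · have hkN : k ≤ N := by omega
    -- fact 1
    have f1 : (2*N).choose (2*k) * (2*N+1) = (2*N+1).choose (2*k) * (2*N+1-2*k) :=
      Nat.choose_mul_succ_eq (2*N) (2*k)
    have f2 : (2*N+1) * (2*N).choose (2*k-2) = (2*N+1).choose (2*k-1) * (2*k-1) := by
      have := Nat.add_one_mul_choose_eq (2*N) (2*k-2)
      have e1 : 2*k-2+1 = 2*k-1 := by omega
      simpa [Nat.succ_eq_add_one, e1] using this
    have f3 : (2*N).choose (2*N+2-2*k) = (2*N).choose (2*k-2) := by
      have h : 2*N+2-2*k = 2*N - (2*k-2) := by omega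
      rw [h, Nat.choose_symm (by omega)]
    have f4 : (2*N+2).choose (2*k) = (2*N+1).choose (2*k-1) + (2*N+1).choose (2*k) := by
      rw [show 2*k = 2*k-1+1 by omega]
      exact Nat.choose_succ_succ' ..
    rw [f3, f4]
    have c1 : ((2*N+1-2*k : ℕ) : ℚ) = 2*N+1-2*k := by rw [Nat.cast_sub (by omega)]; push_cast; ring
    have c2 : ((2*k-1 : ℕ) : ℚ) = 2*k-1 := by rw [Nat.cast_sub (by omega)]; push_cast; ring
    have q1 : ((2*N).choose (2*k) : ℚ) * (2*N+1) = ((2*N+1).choose (2*k) : ℚ) * (2*N+1-2*k) := by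
      have := congrArg (Nat.cast : ℕ → ℚ) f1
      push_cast at this
      rw [c1] at this; linarith [this]
    have q2 : (2*(N:ℚ)+1) * ((2*N).choose (2*k-2) : ℚ) = ((2*N+1).choose (2*k-1) : ℚ) * (2*k-1) := by
      have := congrArg (Nat.cast : ℕ → ℚ) f2
      push_cast at this
      rw [c2] at this; linarith [this]
    have d1 : (2 * (N : ℚ) - 2 * k + 1) ≠ 0 := by
      have : (k:ℚ) ≤ N := by exact_mod_cast hkN
      nlinarith
    have d2 : (2 * (k : ℚ) - 1) ≠ 0 := by
      have : (1:ℚ) ≤ k := by exact_mod_cast hk1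
      nlinarith
    have d3 : (2 * (N : ℚ) + 1) ≠ 0 := by positivity
    rw [div_add_div _ _ d1 d2, div_eq_div_iff (mul_ne_zero d1 d2) d3]
    push_cast
    linear_combination (2*(k:ℚ)-1) * q1 + (2*(N:ℚ)-2*k+1) * q2
  · -- k = N+1
    have h0 : (2 * N).choose (2 * (N+1)) = 0 := by
      apply Nat.choose_eq_zero_of_lt; omega
    have h1 : 2*N+2-2*(N+1) = 0 := by omega
    have h2 : (2*N+2).choose (2*(N+1)) = 1 := by
      rw [show 2*(N+1) = 2*N+2 by ring, Nat.choose_self]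
    rw [h0, h1, h2, Nat.choose_zero_right]
    push_cast
    ring
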